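/- Let Q₈ = QuaternionGroup 2 be the quaternion group of order 8, with elements a i (i : ZMod 4) and xa i. Let I = Subgroup.zpowers (a 1), J = Subgroup.zpowers (xa 0), K = Subgroup.zpowers (xa 1) be its three cyclic subgroups of order 4, and let Z be the subgroup of I generated by the element corresponding to a 2 (so Z maps onto the center of Q₈, of order 2). Let X = I/Z be the coset I-set. Consider the coinduced Q₈-set Coind_I^{Q₈} X = {f : Q₈ → X | f(h·g) = h·f(g) for all h ∈ I, g ∈ Q₈} with Q₈-action (g·f)(g') = f(g'·g). Then there is a Q₈-equivariant bijection from Coind_I^{Q₈} X to the disjoint union Q₈/J ⊔ Q₈/K of coset Q₈-sets. -/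
import Mathlib


open QuaternionGroup

/-- The coinduced `G`-set of an `H`-set `X` (where the `H`-action on `X` is given by
`sm`): the set of functions `f : G → X` with `f (h * g) = h • f g` for all `h ∈ H`,
`g ∈ G`. -/
structure CoindSet (G : Type*) [Group G] (H : Subgroup G) (X : Type*)
    (sm : H → X → X) where
  toFun : G → X
  compat : ∀ (h : H) (g : G), toFun (↑h * g) = sm h (toFun g)

/-- The `G`-action on the coinduced set: `(g • f) g' = f (g' * g)`. -/
def coindAct {G : Type*} [Group G] {H : Subgroup G} {X : Type*} {sm : H → X → X}
    (g : G) (f : CoindSet G H X sm) : CoindSet G H X sm where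
  toFun := fun g' => f.toFun (g' * g)
  compat := by
    intro h g'
    show f.toFun (↑h * g' * g) = sm h (f.toFun (g' * g))
    rw [mul_assoc]
    exact f.compat h (g' * g)

/-- The cyclic subgroup `I = ⟨a 1⟩` of order 4 in `Q₈`. -/
def I : Subgroup (QuaternionGroup 2) := Subgroup.zpowers (a 1)

/-- The cyclic subgroup `J = ⟨xa 0⟩` of order 4 in `Q₈`. -/
def J : Subgroup (QuaternionGroup 2) := Subgroup.zpowers (xa 0)

/-- The cyclic subgroup `K = ⟨xa 1⟩` of order 4 in `Q₈`. -/
def K : Subgroup (QuaternionGroup 2) := Subgroup.zpowers (xa 1)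

lemma a2_mem_I : (a 2 : QuaternionGroup 2) ∈ I := by
  have h : (a 1 : QuaternionGroup 2) ^ (2 : ℕ) = a 2 := by
    rw [a_one_pow]
    norm_num
  exact h ▸ pow_mem (Subgroup.mem_zpowers _) 2

/-- The subgroup `Z` of `I` generated by the element corresponding to `a 2`; it maps
onto the center of `Q₈`, of order 2. -/
def Z : Subgroup I := Subgroup.zpowers (⟨a 2, a2_mem_I⟩ : I)

/-! ### Auxiliary material -/

abbrev Q8 := QuaternionGroup 2

def I' : Subgroup Q8 where
  carrier := {x | ∃ i, x = a i}
  one_mem' := by decide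
  mul_mem' := by intro x y hx hy; revert x y hx hy; decide
  inv_mem' := by intro x hx; revert x hx; decide

lemma val_cast_eq (i : ZMod (2*2)) : ((i.val : ZMod (2*2))) = i := by
  simp [ZMod.natCast_val, ZMod.cast_id]

lemma mem_I_iff (x : Q8) : x ∈ I ↔ ∃ i, x = a i := by
  constructor
  · intro hx
    exact Subgroup.zpowers_le.mpr (show (a 1 : Q8) ∈ I' from ⟨1, rfl⟩) hx
  · rintro ⟨i, rfl⟩
    have h : (a 1 : Q8) ^ i.val = a i := by rw [a_one_pow, val_cast_eq]
    exact h ▸ pow_mem (Subgroup.mem_zpowers _) _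

def J' : Subgroup Q8 where
  carrier := {x | x = a 0 ∨ x = a 2 ∨ x = xa 0 ∨ x = xa 2}
  one_mem' := by decide
  mul_mem' := by intro x y hx hy; revert x y hx hy; decide
  inv_mem' := by intro x hx; revert x hx; decide

lemma mem_J_iff (x : Q8) : x ∈ J ↔ (x = a 0 ∨ x = a 2 ∨ x = xa 0 ∨ x = xa 2) := by
  constructor
  · intro hx
    exact Subgroup.zpowers_le.mpr (show (xa 0 : Q8) ∈ J' by right; right; left; rfl) hx
  · rintro (rfl | rfl | rfl | rfl)
    · exact (show ((xa 0 : Q8)) ^ 0 = a 0 by decide) ▸ pow_mem (Subgroup.mem_zpowers _) _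
    · exact (show ((xa 0 : Q8)) ^ 2 = a 2 by decide) ▸ pow_mem (Subgroup.mem_zpowers _) _
    · exact Subgroup.mem_zpowers _
    · exact (show ((xa 0 : Q8)) ^ 3 = xa 2 by decide) ▸ pow_mem (Subgroup.mem_zpowers _) _

def K' : Subgroup Q8 where
  carrier := {x | x = a 0 ∨ x = a 2 ∨ x = xa 1 ∨ x = xa 3}
  one_mem' := by decide
  mul_mem' := by intro x y hx hy; revert x y hx hy; decide
  inv_mem' := by intro x hx; revert x hx; decide

lemma mem_K_iff (x : Q8) : x ∈ K ↔ (x = a 0 ∨ x = a 2 ∨ x = xa 1 ∨ x = xa 3) := by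
  constructor
  · intro hx
    exact Subgroup.zpowers_le.mpr (show (xa 1 : Q8) ∈ K' by right; right; left; rfl) hx
  · rintro (rfl | rfl | rfl | rfl)
    · exact (show ((xa 1 : Q8)) ^ 0 = a 0 by decide) ▸ pow_mem (Subgroup.mem_zpowers _) _
    · exact (show ((xa 1 : Q8)) ^ 2 = a 2 by decide) ▸ pow_mem (Subgroup.mem_zpowers _) _
    · exact Subgroup.mem_zpowers _
    · exact (show ((xa 1 : Q8)) ^ 3 = xa 3 by decide) ▸ pow_mem (Subgroup.mem_zpowers _) _

def Z'' : Subgroup Q8 where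
  carrier := {x | x = a 0 ∨ x = a 2}
  one_mem' := by decide
  mul_mem' := by intro x y hx hy; revert x y hx hy; decide
  inv_mem' := by intro x hx; revert x hx; decide

lemma mem_Z_iff (x : I) : x ∈ Z ↔ ((x : Q8) = a 0 ∨ (x : Q8) = a 2) := by
  constructor
  · intro hx
    obtain ⟨k, hk⟩ := Subgroup.mem_zpowers_iff.mp hx
    have hcoe : (a 2 : Q8) ^ k = (x : Q8) := by
      rw [← hk, SubgroupClass.coe_zpow]
    have h2 : (x : Q8) ∈ Subgroup.zpowers (a 2 : Q8) := Subgroup.mem_zpowers_iff.mpr ⟨k, hcoe⟩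
    exact Subgroup.zpowers_le.mpr (show (a 2 : Q8) ∈ Z'' by right; rfl) h2
  · rintro (h | h)
    · have : x = 1 := Subtype.ext (by rw [h]; rfl)
      exact this ▸ one_mem Z
    · have : x = ⟨a 2, a2_mem_I⟩ := Subtype.ext h
      exact this ▸ Subgroup.mem_zpowers _

def n4 (i : ZMod (2*2)) : I := ⟨a i, (mem_I_iff _).mpr ⟨i, rfl⟩⟩

lemma n4_mul (i j : ZMod (2*2)) : n4 i * n4 j = n4 (i + j) := Subtype.ext rfl

def par : Q8 → ZMod 2
  | a i => (i.val : ZMod 2)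
  | xa i => (i.val : ZMod 2)

lemma par_mul (x y : Q8) : par (x * y) = par x + par y := by revert x y; decide

def ε : I ⧸ Z → ZMod 2 :=
  Quotient.lift (fun x : I => par ↑x) (by
    intro u v huv
    have h : u⁻¹ * v ∈ Z := (QuotientGroup.leftRel_apply).mp huv
    have h' := (mem_Z_iff _).mp h
    have hcoe : ((u⁻¹ * v : I) : Q8) = (↑u)⁻¹ * ↑v := rfl
    obtain ⟨i, hi⟩ := (mem_I_iff _).mp u.2
    obtain ⟨j, hj⟩ := (mem_I_iff _).mp v.2
    rw [hcoe, hi, hj] at h'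
    show par ↑u = par ↑v
    rw [hi, hj]
    clear hcoe hi hj h huv
    clear u v
    revert h'
    revert i j
    decide)

lemma eps_mk (x : I) : ε (QuotientGroup.mk x) = par ↑x := rfl

lemma eps_smul (h : I) (x : I ⧸ Z) : ε (h • x) = par ↑h + ε x := by
  induction x using QuotientGroup.induction_on with
  | H g =>
    rw [MulAction.Quotient.smul_mk, eps_mk, eps_mk]
    exact par_mul _ _

lemma eps_inj : Function.Injective ε := by
  intro x y h
  induction x using QuotientGroup.induction_on with
  | H u =>
  induction y using QuotientGroup.induction_on with
  | H v =>
    rw [eps_mk, eps_mk] at h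
    rw [QuotientGroup.eq, mem_Z_iff]
    have hcoe : ((u⁻¹ * v : I) : Q8) = (↑u)⁻¹ * ↑v := rfl
    obtain ⟨i, hi⟩ := (mem_I_iff _).mp u.2
    obtain ⟨j, hj⟩ := (mem_I_iff _).mp v.2
    rw [hcoe, hi, hj]
    rw [hi, hj] at h
    clear hcoe hi hj
    clear u v
    revert h
    revert i j
    decide

abbrev CS := CoindSet Q8 I (I ⧸ Z) (fun h x => h • x)

lemma cs_a (f : CS) (i : ZMod (2*2)) : f.toFun (a i) = n4 i • f.toFun 1 := by
  have h := f.compat (n4 i) 1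
  rw [mul_one] at h
  exact h

lemma cs_xa (f : CS) (i : ZMod (2*2)) : f.toFun (xa i) = n4 (-i) • f.toFun (xa 0) := by
  have h := f.compat (n4 (-i)) (xa 0)
  have hx : ((n4 (-i) : I) : Q8) * xa 0 = xa i := by
    show a (-i) * xa 0 = xa i
    rw [a_mul_xa]; ring_nf
  rw [hx] at h
  exact h

lemma cs_ext {f g : CS} (h1 : f.toFun 1 = g.toFun 1) (h2 : f.toFun (xa 0) = g.toFun (xa 0)) :
    f = g := by
  have h : f.toFun = g.toFun := funext fun x => by
    cases x with
    | a i => rw [cs_a f i, cs_a g i, h1]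
    | xa i => rw [cs_xa f i, cs_xa g i, h2]
  cases f; cases g
  simpa using h

def F (p q : ZMod 2) : CS where
  toFun := fun g => match g with
    | a i => QuotientGroup.mk (n4 (i + p.val))
    | xa i => QuotientGroup.mk (n4 (-i + q.val))
  compat := by
    intro h g
    obtain ⟨k, hk⟩ := (mem_I_iff ↑h).mp h.2
    have hh : h = n4 k := Subtype.ext hk
    subst hh
    cases g with
    | a i =>
      show QuotientGroup.mk (n4 (k + i + ↑p.val)) = n4 k • QuotientGroup.mk (n4 (i + ↑p.val))
      rw [MulAction.Quotient.smul_mk, smul_eq_mul, n4_mul, add_assoc]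
    | xa i =>
      show QuotientGroup.mk (n4 (-(i - k) + ↑q.val)) = n4 k • QuotientGroup.mk (n4 (-i + ↑q.val))
      rw [MulAction.Quotient.smul_mk, smul_eq_mul, n4_mul]
      have hind : -(i - k) + (↑q.val : ZMod (2*2)) = k + (-i + ↑q.val) := by ring
      rw [hind]

def eF : CS → (Q8 ⧸ J) ⊕ (Q8 ⧸ K) := fun f =>
  if ε (f.toFun 1) = ε (f.toFun (xa 0)) then
    Sum.inl (QuotientGroup.mk (a ((ε (f.toFun 1)).val)))
  else
    Sum.inr (QuotientGroup.mk (a ((ε (f.toFun 1)).val)))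

lemma eF_eq (f : CS) {p q : ZMod 2} (hp : ε (f.toFun 1) = p) (hq : ε (f.toFun (xa 0)) = q) :
    eF f = if p = q then Sum.inl (QuotientGroup.mk (a (p.val : ZMod (2*2))))
      else Sum.inr (QuotientGroup.mk (a (p.val : ZMod (2*2)))) := by
  subst hp; subst hq; rfl

lemma F_eps1 (p q : ZMod 2) : ε ((F p q).toFun 1) = p := by revert p q; decide

lemma F_eps2 (p q : ZMod 2) : ε ((F p q).toFun (xa 0)) = q := by revert p q; decide

/-! decidable coset computations -/

lemma Jquot (i : ZMod (2*2)) (p : ZMod 2) :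
    (QuotientGroup.mk (a ((((i.val : ZMod 2) + p)).val : ZMod (2*2))) : Q8 ⧸ J)
      = a i • QuotientGroup.mk (a (p.val : ZMod (2*2))) := by
  rw [MulAction.Quotient.smul_mk, QuotientGroup.eq, mem_J_iff]
  revert i p
  decide

lemma Kquot (i : ZMod (2*2)) (p : ZMod 2) :
    (QuotientGroup.mk (a ((((i.val : ZMod 2) + p)).val : ZMod (2*2))) : Q8 ⧸ K)
      = a i • QuotientGroup.mk (a (p.val : ZMod (2*2))) := by
  rw [MulAction.Quotient.smul_mk, QuotientGroup.eq, mem_K_iff]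
  revert i p
  decide

lemma JquotX (i : ZMod (2*2)) (p : ZMod 2) :
    (QuotientGroup.mk (a (((((-i).val : ZMod 2) + p)).val : ZMod (2*2))) : Q8 ⧸ J)
      = xa i • QuotientGroup.mk (a (p.val : ZMod (2*2))) := by
  rw [MulAction.Quotient.smul_mk, QuotientGroup.eq, mem_J_iff]
  revert i p
  decide

lemma KquotX (i : ZMod (2*2)) (p : ZMod 2) :
    (QuotientGroup.mk (a (((((-i).val : ZMod 2) + (p+1))).val : ZMod (2*2))) : Q8 ⧸ K)
      = xa i • QuotientGroup.mk (a (p.val : ZMod (2*2))) := by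
  rw [MulAction.Quotient.smul_mk, QuotientGroup.eq, mem_K_iff]
  revert i p
  decide

lemma par_n4_neg (i : ZMod (2*2)) : par ↑(n4 (-i)) = (i.val : ZMod 2) := by revert i; decide

lemma condX (i : ZMod (2*2)) (p : ZMod 2) :
    (((-i).val : ZMod 2) + p) = (((2+i : ZMod (2*2)).val : ZMod 2) + p) := by
  revert i p; decide

lemma zmod2_ne {p q : ZMod 2} (h : ¬ p = q) : q = p + 1 := by revert h; revert p q; decide

lemma zmod2_ne_succ (p : ZMod 2) : ¬ p = p + 1 := by revert p; decide

lemma eF_equiv (g : Q8) (f : CS) :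
    eF (coindAct g f) = Sum.map (fun x => g • x) (fun x => g • x) (eF f) := by
  cases g with
  | a i =>
    have ha1 : ε ((coindAct (a i) f).toFun 1) = (i.val : ZMod 2) + ε (f.toFun 1) := by
      have e : (coindAct (a i) f).toFun 1 = f.toFun (a i) := by
        show f.toFun (1 * a i) = _
        rw [one_mul]
      rw [e, cs_a f i, eps_smul]
      rfl
    have ha2 : ε ((coindAct (a i) f).toFun (xa 0)) = (i.val : ZMod 2) + ε (f.toFun (xa 0)) := by
      have e : (coindAct (a i) f).toFun (xa 0) = f.toFun (xa i) := by
        show f.toFun (xa 0 * a i) = _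
        rw [xa_mul_a, zero_add]
      rw [e, cs_xa f i, eps_smul, par_n4_neg]
    rw [eF_eq _ ha1 ha2, eF_eq f rfl rfl]
    generalize ε (f.toFun 1) = p
    generalize ε (f.toFun (xa 0)) = q
    by_cases hpq : p = q
    · subst hpq
      rw [if_pos rfl, if_pos rfl]
      simp only [Sum.map_inl]
      exact congrArg Sum.inl (Jquot i p)
    · rw [if_neg (fun hc => hpq (add_left_cancel hc)), if_neg hpq]
      simp only [Sum.map_inr]
      exact congrArg Sum.inr (Kquot i p)
  | xa i =>
    have hb1 : ε ((coindAct (xa i) f).toFun 1) = ((-i).val : ZMod 2) + ε (f.toFun (xa 0)) := by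
      have e : (coindAct (xa i) f).toFun 1 = f.toFun (xa i) := by
        show f.toFun (1 * xa i) = _
        rw [one_mul]
      rw [e, cs_xa f i, eps_smul]
      rfl
    have hb2 : ε ((coindAct (xa i) f).toFun (xa 0))
        = (((2 + i : ZMod (2*2)).val : ZMod 2)) + ε (f.toFun 1) := by
      have e : (coindAct (xa i) f).toFun (xa 0) = f.toFun (a (2 + i)) := by
        show f.toFun (xa 0 * xa i) = _
        rw [xa_mul_xa]
        norm_num
      rw [e, cs_a f _, eps_smul]
      rfl
    rw [eF_eq _ hb1 hb2, eF_eq f rfl rfl]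
    generalize ε (f.toFun 1) = p
    generalize ε (f.toFun (xa 0)) = q
    by_cases hpq : p = q
    · subst hpq
      rw [if_pos (condX i p), if_pos rfl]
      simp only [Sum.map_inl]
      exact congrArg Sum.inl (JquotX i p)
    · have hne : ¬ (((-i).val : ZMod 2) + q = ((2+i : ZMod (2*2)).val : ZMod 2) + p) := by
        intro hc
        rw [← condX i p] at hc
        exact hpq (add_left_cancel hc).symm
      rw [if_neg hne, if_neg hpq]
      simp only [Sum.map_inr]
      rw [zmod2_ne hpq]
      exact congrArg Sum.inr (KquotX i p)

lemma Jcl (s t : ZMod 2)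
    (hst : (QuotientGroup.mk (a (s.val : ZMod (2*2))) : Q8 ⧸ J)
      = QuotientGroup.mk (a (t.val : ZMod (2*2)))) : s = t := by
  have hm := (mem_J_iff _).mp (QuotientGroup.eq.mp hst)
  clear hst
  revert hm
  revert s t
  decide

lemma Kcl (s t : ZMod 2)
    (hst : (QuotientGroup.mk (a (s.val : ZMod (2*2))) : Q8 ⧸ K)
      = QuotientGroup.mk (a (t.val : ZMod (2*2)))) : s = t := by
  have hm := (mem_K_iff _).mp (QuotientGroup.eq.mp hst)
  clear hst
  revert hm
  revert s t
  decide

lemma eF_inj : Function.Injective eF := by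
  intro f f' h
  rw [eF_eq f rfl rfl, eF_eq f' rfl rfl] at h
  by_cases c : ε (f.toFun 1) = ε (f.toFun (xa 0)) <;>
    by_cases c' : ε (f'.toFun 1) = ε (f'.toFun (xa 0))
  · rw [if_pos c, if_pos c'] at h
    have hp := Jcl _ _ (Sum.inl.inj h)
    exact cs_ext (eps_inj hp) (eps_inj (by rw [← c, ← c', hp]))
  · rw [if_pos c, if_neg c'] at h
    exact absurd h (by simp)
  · rw [if_neg c, if_pos c'] at h
    exact absurd h (by simp)
  · rw [if_neg c, if_neg c'] at h
    have hp := Kcl _ _ (Sum.inr.inj h)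
    have hq : ε (f.toFun (xa 0)) = ε (f'.toFun (xa 0)) := by
      rw [zmod2_ne c, zmod2_ne c', hp]
    exact cs_ext (eps_inj hp) (eps_inj hq)

lemma JrepA (i : ZMod (2*2)) :
    (QuotientGroup.mk (a i) : Q8 ⧸ J) = QuotientGroup.mk (a (((i.val : ZMod 2)).val : ZMod (2*2))) := by
  rw [QuotientGroup.eq, mem_J_iff]
  revert i; decide

lemma JrepX (i : ZMod (2*2)) :
    (QuotientGroup.mk (xa i) : Q8 ⧸ J) = QuotientGroup.mk (a (((i.val : ZMod 2)).val : ZMod (2*2))) := by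
  rw [QuotientGroup.eq, mem_J_iff]
  revert i; decide

lemma KrepA (i : ZMod (2*2)) :
    (QuotientGroup.mk (a i) : Q8 ⧸ K) = QuotientGroup.mk (a (((i.val : ZMod 2)).val : ZMod (2*2))) := by
  rw [QuotientGroup.eq, mem_K_iff]
  revert i; decide

lemma KrepX (i : ZMod (2*2)) :
    (QuotientGroup.mk (xa i) : Q8 ⧸ K) = QuotientGroup.mk (a ((((i.val : ZMod 2) + 1)).val : ZMod (2*2))) := by
  rw [QuotientGroup.eq, mem_K_iff]
  revert i; decide

lemma eF_surj : Function.Surjective eF := by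
  rintro (c | c)
  · obtain ⟨g, rfl⟩ := QuotientGroup.mk_surjective c
    cases g with
    | a i =>
      refine ⟨F (i.val : ZMod 2) (i.val : ZMod 2), ?_⟩
      rw [eF_eq _ (F_eps1 _ _) (F_eps2 _ _), if_pos rfl]
      exact congrArg Sum.inl (JrepA i).symm
    | xa i =>
      refine ⟨F (i.val : ZMod 2) (i.val : ZMod 2), ?_⟩
      rw [eF_eq _ (F_eps1 _ _) (F_eps2 _ _), if_pos rfl]
      exact congrArg Sum.inl (JrepX i).symm
  · obtain ⟨g, rfl⟩ := QuotientGroup.mk_surjective c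
    cases g with
    | a i =>
      refine ⟨F (i.val : ZMod 2) ((i.val : ZMod 2) + 1), ?_⟩
      rw [eF_eq _ (F_eps1 _ _) (F_eps2 _ _), if_neg (zmod2_ne_succ _)]
      exact congrArg Sum.inr (KrepA i).symm
    | xa i =>
      refine ⟨F ((i.val : ZMod 2) + 1) (((i.val : ZMod 2) + 1) + 1), ?_⟩
      rw [eF_eq _ (F_eps1 _ _) (F_eps2 _ _), if_neg (zmod2_ne_succ _)]
      exact congrArg Sum.inr (KrepX i).symm


/-- The coinduction to `Q₈` of the coset `I`-set `I ⧸ Z` is `Q₈`-equivariantly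
bijective to the disjoint union `Q₈ ⧸ J ⊔ Q₈ ⧸ K` of coset `Q₈`-sets. -/
theorem stmt11 :
    ∃ e : CoindSet (QuaternionGroup 2) I (I ⧸ Z) (fun h x => h • x) ≃
        ((QuaternionGroup 2 ⧸ J) ⊕ (QuaternionGroup 2 ⧸ K)),
      ∀ (g : QuaternionGroup 2)
        (f : CoindSet (QuaternionGroup 2) I (I ⧸ Z) (fun h x => h • x)),
        e (coindAct g f) = Sum.map (fun x => g • x) (fun x => g • x) (e f) := by
  exact ⟨Equiv.ofBijective eF ⟨eF_inj, eF_surj⟩, fun g f => eF_equiv g f⟩
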